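/- For every δ > 0 there is a constant C_δ > 0 such that ∫_{ℝ³} (1+|x|)^{-5/2} (1+|x|-x₁)^{-1/2-2δ} dx ≤ C_δ. In particular, any measurable function f on ℝ³ with |f(x)| ≤ M (1+|x|)^{-5/2}(1+|x|-x₁)^{-1/2-2δ} for all x is integrable with ∫|f| ≤ C_δ M. -/

import Mathlib

open MeasureTheory Real

private lemma coord_abs_le_norm (x : EuclideanSpace ℝ (Fin 3)) (i : Fin 3) : |x i| ≤ ‖x‖ := by
  rw [EuclideanSpace.norm_eq, ← Real.sqrt_sq_eq_abs]
  apply Real.sqrt_le_sqrt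
  have := Finset.single_le_sum (f := fun j => ‖x j‖ ^ 2) (fun j _ => sq_nonneg _)
    (Finset.mem_univ i)
  simpa [Real.norm_eq_abs, sq_abs] using this

private lemma norm_sq_eq3 (x : EuclideanSpace ℝ (Fin 3)) :
    ‖x‖ ^ 2 = (x 0) ^ 2 + (x 1) ^ 2 + (x 2) ^ 2 := by
  rw [EuclideanSpace.norm_eq, Real.sq_sqrt (by positivity)]
  simp [Fin.sum_univ_three, Real.norm_eq_abs, sq_abs]

private lemma key_bound {δ : ℝ} (hδ0 : 0 < δ) (hδ1 : δ ≤ 1/3) (x : EuclideanSpace ℝ (Fin 3)) :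
    (1 + ‖x‖) ^ (-(5 : ℝ)/2) * (1 + ‖x‖ - x 0) ^ (-(1:ℝ)/2 - 2*δ) ≤
    (4 : ℝ) ^ ((1:ℝ)/2 + 2*δ) *
      ((1 + |x 0|) ^ (-(1+δ)) * ((1 + |x 1|) ^ (-(1+δ/2)) * (1 + |x 2|) ^ (-(1+δ/2)))) := by
  set r := ‖x‖ with hr
  set t := x 0 with htdef
  set σ : ℝ := 1/2 + 2*δ with hσ
  have hr0 : 0 ≤ r := norm_nonneg x
  have hsum : r ^ 2 = (x 0) ^ 2 + (x 1) ^ 2 + (x 2) ^ 2 := norm_sq_eq3 x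
  have ha : |x 0| ≤ r := coord_abs_le_norm x 0
  have hb : |x 1| ≤ r := coord_abs_le_norm x 1
  have hc : |x 2| ≤ r := coord_abs_le_norm x 2
  have ht : t ≤ r := le_trans (le_abs_self _) ha
  have hw : (1:ℝ) ≤ 1 + r - t := by linarith
  have hw0 : (0:ℝ) < 1 + r - t := by linarith
  have hσ0 : 0 ≤ σ := by rw [hσ]; linarith
  have hb0 : (0:ℝ) ≤ |x 1| := abs_nonneg _
  have hc0 : (0:ℝ) ≤ |x 2| := abs_nonneg _
  have h2 : (1 + |x 1|) * (1 + |x 2|) ≤ 4 * ((1 + r) * (1 + r - t)) := by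
    nlinarith [sq_nonneg (r - t), sq_nonneg (|x 1| - 1), sq_nonneg (|x 2| - 1),
      sq_nonneg (|x 1| - |x 2|), sq_abs (x 1), sq_abs (x 2), sq_abs (x 0),
      abs_nonneg (x 0), le_abs_self (x 0)]
  have h3 : (1 + |x 1|) * (1 + |x 2|) ≤ (1 + r) * (1 + r) := by nlinarith
  -- the positive-exponent inequality
  have hQ : (1 + |x 0|) ^ ((1:ℝ)+δ) * ((1 + |x 1|) ^ ((1:ℝ)+δ/2) * (1 + |x 2|) ^ ((1:ℝ)+δ/2)) ≤
      4 ^ σ * ((1 + r) ^ ((5:ℝ)/2) * (1 + r - t) ^ σ) := by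
    have e1 : (1 + |x 0|) ^ ((1:ℝ)+δ) ≤ (1 + r) ^ ((1:ℝ)+δ) :=
      Real.rpow_le_rpow (by positivity) (by linarith) (by linarith)
    have hsplit : (1 + |x 1|) ^ ((1:ℝ)+δ/2) * (1 + |x 2|) ^ ((1:ℝ)+δ/2) =
        ((1 + |x 1|) * (1 + |x 2|)) ^ σ *
          ((1 + |x 1|) * (1 + |x 2|)) ^ ((1 - 3*δ)/2) := by
      rw [← Real.rpow_add (by positivity), Real.mul_rpow (by positivity) (by positivity)]
      norm_num [hσ]
      ring_nf
    have e2 : ((1 + |x 1|) * (1 + |x 2|)) ^ σ ≤ (4 * ((1 + r) * (1 + r - t))) ^ σ :=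
      Real.rpow_le_rpow (by positivity) h2 hσ0
    have e3 : ((1 + |x 1|) * (1 + |x 2|)) ^ ((1 - 3*δ)/2) ≤
        ((1 + r) * (1 + r)) ^ ((1 - 3*δ)/2) :=
      Real.rpow_le_rpow (by positivity) h3 (by linarith)
    calc (1 + |x 0|) ^ ((1:ℝ)+δ) * ((1 + |x 1|) ^ ((1:ℝ)+δ/2) * (1 + |x 2|) ^ ((1:ℝ)+δ/2))
        ≤ (1 + r) ^ ((1:ℝ)+δ) *
            ((4 * ((1 + r) * (1 + r - t))) ^ σ * ((1 + r) * (1 + r)) ^ ((1 - 3*δ)/2)) := by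
          rw [hsplit]
          apply mul_le_mul e1 (mul_le_mul e2 e3 (by positivity) (by positivity)) (by positivity)
            (by positivity)
      _ = 4 ^ σ * ((1 + r) ^ ((5:ℝ)/2) * (1 + r - t) ^ σ) := by
          have hb1 : (0:ℝ) < 1 + r := by positivity
          rw [Real.mul_rpow (by norm_num) (by positivity),
            Real.mul_rpow (by positivity) (by positivity),
            Real.mul_rpow (by positivity) (by positivity),
            ← Real.rpow_add hb1]
          have hcomb : (1 + r) ^ ((1:ℝ)+δ) * ((1 + r) ^ σ *
              (1 + r) ^ ((1 - 3*δ)/2 + (1 - 3*δ)/2)) = (1 + r) ^ ((5:ℝ)/2) := by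
            rw [← Real.rpow_add hb1, ← Real.rpow_add hb1]
            congr 1
            rw [hσ]; ring
          linear_combination (4:ℝ) ^ σ * (1 + r - t) ^ σ * hcomb
  -- now convert to negative exponents
  have hP0 : (0:ℝ) < (1 + r) ^ ((5:ℝ)/2) * (1 + r - t) ^ σ := by positivity
  have hQ0 : (0:ℝ) < (1 + |x 0|) ^ ((1:ℝ)+δ) *
      ((1 + |x 1|) ^ ((1:ℝ)+δ/2) * (1 + |x 2|) ^ ((1:ℝ)+δ/2)) := by positivity
  have h4 : (0:ℝ) < (4:ℝ) ^ σ := by positivity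
  have hfinal : ((1 + r) ^ ((5:ℝ)/2) * (1 + r - t) ^ σ)⁻¹ ≤
      4 ^ σ * ((1 + |x 0|) ^ ((1:ℝ)+δ) *
        ((1 + |x 1|) ^ ((1:ℝ)+δ/2) * (1 + |x 2|) ^ ((1:ℝ)+δ/2)))⁻¹ := by
    have h5 : (4 ^ σ * ((1 + r) ^ ((5:ℝ)/2) * (1 + r - t) ^ σ))⁻¹ ≤
        ((1 + |x 0|) ^ ((1:ℝ)+δ) *
          ((1 + |x 1|) ^ ((1:ℝ)+δ/2) * (1 + |x 2|) ^ ((1:ℝ)+δ/2)))⁻¹ :=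
      inv_anti₀ hQ0 hQ
    have h6 := mul_le_mul_of_nonneg_left h5 (le_of_lt h4)
    calc ((1 + r) ^ ((5:ℝ)/2) * (1 + r - t) ^ σ)⁻¹
        = 4 ^ σ * (4 ^ σ * ((1 + r) ^ ((5:ℝ)/2) * (1 + r - t) ^ σ))⁻¹ := by
          field_simp
      _ ≤ _ := h6
  calc (1 + r) ^ (-(5 : ℝ)/2) * (1 + r - t) ^ (-(1:ℝ)/2 - 2*δ)
      = ((1 + r) ^ ((5:ℝ)/2) * (1 + r - t) ^ σ)⁻¹ := by
        rw [show (-(5:ℝ)/2) = -((5:ℝ)/2) by ring, show (-(1:ℝ)/2 - 2*δ) = -σ by rw [hσ]; ring,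
          Real.rpow_neg (by positivity), Real.rpow_neg (by positivity), mul_inv]
    _ ≤ 4 ^ σ * ((1 + |x 0|) ^ ((1:ℝ)+δ) *
        ((1 + |x 1|) ^ ((1:ℝ)+δ/2) * (1 + |x 2|) ^ ((1:ℝ)+δ/2)))⁻¹ := hfinal
    _ = 4 ^ σ * ((1 + |x 0|) ^ (-(1+δ)) * ((1 + |x 1|) ^ (-(1+δ/2)) * (1 + |x 2|) ^ (-(1+δ/2)))) := by
        rw [Real.rpow_neg (by positivity), Real.rpow_neg (by positivity),
          Real.rpow_neg (by positivity), mul_inv, mul_inv]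

private lemma g_integrable {p : ℝ} (hp : 1 < p) :
    Integrable (fun t : ℝ => (1 + |t|) ^ (-p)) := by
  have h := integrable_one_add_norm (E := ℝ) (μ := volume) (r := p) (by simpa using hp)
  simpa [Real.norm_eq_abs] using h

private lemma G_integrable {p q : ℝ} (hp : 1 < p) (hq : 1 < q) :
    Integrable (fun x : EuclideanSpace ℝ (Fin 3) =>
      (1 + |x 0|) ^ (-p) * ((1 + |x 1|) ^ (-q) * (1 + |x 2|) ^ (-q))) := by
  classical
  have h1 : Integrable (fun y : Fin 3 → ℝ => ∏ i, (1 + |y i|) ^ (-(![p, q, q] i))) := by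
    apply Integrable.fintype_prod (f := fun i (t : ℝ) => (1 + |t|) ^ (-(![p, q, q] i)))
    intro i
    fin_cases i
    · simpa using g_integrable hp
    · simpa using g_integrable hq
    · simpa using g_integrable hq
  have hmp := EuclideanSpace.volume_preserving_symm_measurableEquiv_toLp (Fin 3)
  have h2 := (hmp.integrable_comp_emb
    (MeasurableEquiv.toLp 2 (Fin 3 → ℝ)).symm.measurableEmbedding).mpr h1
  have : (fun y : Fin 3 → ℝ => ∏ i, (1 + |y i|) ^ (-(![p, q, q] i))) ∘
      (MeasurableEquiv.toLp 2 (Fin 3 → ℝ)).symm =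
      fun x : EuclideanSpace ℝ (Fin 3) =>
        (1 + |x 0|) ^ (-p) * ((1 + |x 1|) ^ (-q) * (1 + |x 2|) ^ (-q)) := by
    funext x
    simp only [Function.comp_apply, Fin.prod_univ_three]
    norm_num [mul_assoc]
    exact Or.inl (Or.inl rfl)
  rwa [this] at h2

theorem stmt_0 (δ : ℝ) (hδ : 0 < δ) :
    ∃ C : ℝ, 0 < C ∧
      (∫⁻ x : EuclideanSpace ℝ (Fin 3),
          ENNReal.ofReal ((1 + ‖x‖) ^ (-(5 : ℝ)/2) * (1 + ‖x‖ - x 0) ^ (-(1:ℝ)/2 - 2*δ))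
        ≤ ENNReal.ofReal C) ∧
      ∀ (f : EuclideanSpace ℝ (Fin 3) → ℝ) (M : ℝ), 0 ≤ M → Measurable f →
        (∀ x, |f x| ≤ M * ((1 + ‖x‖) ^ (-(5 : ℝ)/2) * (1 + ‖x‖ - x 0) ^ (-(1:ℝ)/2 - 2*δ))) →
        Integrable f ∧ ∫ x, |f x| ≤ C * M := by
  set δ₀ : ℝ := min δ (1/3) with hδ₀def
  have hδ₀0 : 0 < δ₀ := lt_min hδ (by norm_num)
  have hδ₀1 : δ₀ ≤ 1/3 := min_le_right _ _
  set K : ℝ := (4 : ℝ) ^ ((1:ℝ)/2 + 2*δ₀) with hK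
  have hK0 : 0 < K := by positivity
  set G : EuclideanSpace ℝ (Fin 3) → ℝ := fun x =>
    (1 + |x 0|) ^ (-(1+δ₀)) * ((1 + |x 1|) ^ (-(1+δ₀/2)) * (1 + |x 2|) ^ (-(1+δ₀/2))) with hG
  have hGint : Integrable G := G_integrable (by linarith) (by linarith)
  have hGnn : ∀ x, 0 ≤ G x := fun x => by positivity
  have hKGint : Integrable (fun x => K * G x) := hGint.const_mul K
  -- pointwise bound for the original integrand
  have hptw : ∀ x : EuclideanSpace ℝ (Fin 3),
      (1 + ‖x‖) ^ (-(5 : ℝ)/2) * (1 + ‖x‖ - x 0) ^ (-(1:ℝ)/2 - 2*δ) ≤ K * G x := by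
    intro x
    have hx0 : x 0 ≤ ‖x‖ := le_trans (le_abs_self _) (coord_abs_le_norm x 0)
    have hw : (1:ℝ) ≤ 1 + ‖x‖ - x 0 := by linarith
    have hmono : (1 + ‖x‖ - x 0) ^ (-(1:ℝ)/2 - 2*δ) ≤ (1 + ‖x‖ - x 0) ^ (-(1:ℝ)/2 - 2*δ₀) := by
      apply Real.rpow_le_rpow_of_exponent_le hw
      have : δ₀ ≤ δ := min_le_left _ _
      linarith
    calc (1 + ‖x‖) ^ (-(5 : ℝ)/2) * (1 + ‖x‖ - x 0) ^ (-(1:ℝ)/2 - 2*δ)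
        ≤ (1 + ‖x‖) ^ (-(5 : ℝ)/2) * (1 + ‖x‖ - x 0) ^ (-(1:ℝ)/2 - 2*δ₀) := by
          apply mul_le_mul_of_nonneg_left hmono (by positivity)
      _ ≤ K * G x := key_bound hδ₀0 hδ₀1 x
  have hIntNN : 0 ≤ ∫ x, K * G x := integral_nonneg (fun x => by positivity)
  refine ⟨(∫ x, K * G x) + 1, by linarith, ?_, ?_⟩
  · calc ∫⁻ x : EuclideanSpace ℝ (Fin 3),
          ENNReal.ofReal ((1 + ‖x‖) ^ (-(5 : ℝ)/2) * (1 + ‖x‖ - x 0) ^ (-(1:ℝ)/2 - 2*δ))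
        ≤ ∫⁻ x, ENNReal.ofReal (K * G x) :=
          lintegral_mono fun x => ENNReal.ofReal_le_ofReal (hptw x)
      _ = ENNReal.ofReal (∫ x, K * G x) :=
          (ofReal_integral_eq_lintegral_ofReal hKGint
            (Filter.Eventually.of_forall fun x => by positivity)).symm
      _ ≤ ENNReal.ofReal ((∫ x, K * G x) + 1) := ENNReal.ofReal_le_ofReal (by linarith)
  · intro f M hM hfm hfb
    have hbound : ∀ x, ‖f x‖ ≤ M * (K * G x) := by
      intro x
      rw [Real.norm_eq_abs]
      exact le_trans (hfb x) (mul_le_mul_of_nonneg_left (hptw x) hM)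
    have hMKG : Integrable (fun x => M * (K * G x)) := hKGint.const_mul M
    have hfint : Integrable f :=
      hMKG.mono' hfm.aestronglyMeasurable (Filter.Eventually.of_forall hbound)
    refine ⟨hfint, ?_⟩
    calc ∫ x, |f x| ≤ ∫ x, M * (K * G x) := by
          apply integral_mono hfint.abs hMKG
          intro x
          simpa [Real.norm_eq_abs] using hbound x
      _ = M * ∫ x, K * G x := integral_const_mul M _
      _ ≤ ((∫ x, K * G x) + 1) * M := by nlinarith
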